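/- Let G be a Herglotz vector field in the class ℳₙ, let T ∈ R_G be a regular point and let 0 ≤ s < T. Then G(φ^G_{s,T}(z),T) = lim_{ε→0⁺} (1/ε)∫_{T−ε}^{T} G(φ^G_{s,τ}(z),τ)dτ, locally uniformly with respect to z ∈ 𝔹ⁿ. -/

import Mathlib

open Metric MeasureTheory Filter Topology Set

noncomputable section

/-- `ℂⁿ` with the Euclidean norm. -/
abbrev En (n : ℕ) := EuclideanSpace ℂ (Fin n)

/-- The open unit ball `𝔹ⁿ ⊆ ℂⁿ`. -/
def 𝔹 (n : ℕ) : Set (En n) := Metric.ball 0 1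

/-- Holomorphic maps `𝔹ⁿ → ℂⁿ` (represented by global functions, holomorphic on the ball). -/
def Hol (n : ℕ) : Set (En n → En n) := {f | DifferentiableOn ℂ f (𝔹 n)}

/-- The class `ℳₙ`: holomorphic `h` with `h 0 = 0`, `dh₀ = -id` and `Re ⟪h z, z⟫ ≤ 0` on `𝔹ⁿ`. -/
def ClassM (n : ℕ) : Set (En n → En n) :=
  {h | DifferentiableOn ℂ h (𝔹 n) ∧ h 0 = 0 ∧
    fderiv ℂ h 0 = -(1 : En n →L[ℂ] En n) ∧
    ∀ z ∈ 𝔹 n, (inner ℂ (h z) z : ℂ).re ≤ 0}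

/-- Herglotz vector field in the class `ℳₙ`. -/
def IsHerglotz (n : ℕ) (G : ℝ → En n → En n) : Prop :=
  (∀ z ∈ 𝔹 n, StronglyMeasurable fun t : ℝ => G t z) ∧
  (∀ᵐ t ∂(volume.restrict (Ici (0 : ℝ))), G t ∈ ClassM n)

/-- The evolution family `φ_{s,t}` generated by `G` (integral form of the Loewner ODE,
equivalent to local absolute continuity plus the ODE a.e.). -/
def IsEvolution (n : ℕ) (G : ℝ → En n → En n) (φ : ℝ → ℝ → En n → En n) : Prop :=
  ∀ s : ℝ, 0 ≤ s →
    (∀ t : ℝ, s ≤ t → DifferentiableOn ℂ (φ s t) (𝔹 n)) ∧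
    ∀ z ∈ 𝔹 n,
      (∀ t : ℝ, s ≤ t → φ s t z ∈ 𝔹 n) ∧
      (∀ t : ℝ, s ≤ t → φ s t z = z + ∫ τ in s..t, G τ (φ s τ z))

/-- `f = lim_{t→∞} eᵗ φ_{s,t}` locally uniformly on the ball. -/
def IsLoewnerLimit (n : ℕ) (φ : ℝ → ℝ → En n → En n) (s : ℝ) (f : En n → En n) : Prop :=
  TendstoLocallyUniformlyOn (fun t : ℝ => fun z => Real.exp t • φ s t z) f atTop (𝔹 n)

/-- The class `𝒮ₙ⁰` of maps with parametric representation. -/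
def S0 (n : ℕ) : Set (En n → En n) :=
  {f | ∃ G φ, IsHerglotz n G ∧ IsEvolution n G φ ∧ IsLoewnerLimit n φ 0 f}

/-- `T` is a regular point of `G`: the backward averages of `G(·,τ)` converge to `G(·,T)`
locally uniformly on the ball. -/
def RegularPoint (n : ℕ) (G : ℝ → En n → En n) (T : ℝ) : Prop :=
  0 < T ∧ TendstoLocallyUniformlyOn
    (fun ε : ℝ => fun z => (ε⁻¹ : ℝ) • ∫ τ in T - ε..T, G τ z)
    (fun z => G T z) (𝓝[>] (0 : ℝ)) (𝔹 n)

/-- The needle variation of `G` with data `(T, h)` and width `ε`. -/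
def needle {n : ℕ} (G : ℝ → En n → En n) (T ε : ℝ) (h : En n → En n) :
    ℝ → En n → En n :=
  fun t => if t ∈ Ioo (T - ε) T then h else G t

/-- A (sequentially) open subset of `Hol(𝔹ⁿ,ℂⁿ)` for the topology of locally uniform
convergence. -/
def SeqOpenIn (n : ℕ) (V : Set (En n → En n)) : Prop :=
  V ⊆ Hol n ∧ ∀ f ∈ V, ∀ u : ℕ → En n → En n, (∀ k, u k ∈ Hol n) →
    TendstoLocallyUniformlyOn u f atTop (𝔹 n) → ∀ᶠ k in atTop, u k ∈ V

/-- Directional derivative of a functional `Φ` at `f` along `h`. -/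
def HasDirDeriv (n : ℕ) (Φ : (En n → En n) → ℂ) (f h : En n → En n) (c : ℂ) : Prop :=
  Tendsto (fun δ : ℂ => (Φ (f + δ • h) - Φ f) / δ) (𝓝[≠] (0 : ℂ)) (𝓝 c)

/-- `Φ` is complex differentiable at `F` with complex derivative `L`, in Hamilton's sense. -/
def HamiltonDiffAt (n : ℕ) (Φ : (En n → En n) → ℂ) (F : En n → En n)
    (L : (En n → En n) → ℂ) : Prop :=
  ∃ (V : Set (En n → En n)) (Λ : (En n → En n) → (En n → En n) → ℂ),
    F ∈ V ∧ SeqOpenIn n V ∧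
    (∀ f ∈ V, ∀ h ∈ Hol n, HasDirDeriv n Φ f h (Λ f h)) ∧
    (∀ f ∈ V, ∀ h ∈ Hol n, ∀ fk hk : ℕ → En n → En n,
      (∀ k, fk k ∈ V) → (∀ k, hk k ∈ Hol n) →
      TendstoLocallyUniformlyOn fk f atTop (𝔹 n) →
      TendstoLocallyUniformlyOn hk h atTop (𝔹 n) →
      Tendsto (fun k => Λ (fk k) (hk k)) atTop (𝓝 (Λ f h))) ∧
    L = Λ F

/-- A continuous linear functional on `Hol(𝔹ⁿ,ℂⁿ)`. -/
def ContLinFunctional (n : ℕ) (L : (En n → En n) → ℂ) : Prop :=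
  (∀ f ∈ Hol n, ∀ g ∈ Hol n, L (f + g) = L f + L g) ∧
  (∀ (c : ℂ), ∀ f ∈ Hol n, L (c • f) = c * L f) ∧
  (∀ (fk : ℕ → En n → En n), ∀ f ∈ Hol n, (∀ k, fk k ∈ Hol n) →
    TendstoLocallyUniformlyOn fk f atTop (𝔹 n) →
    Tendsto (fun k => L (fk k)) atTop (𝓝 (L f)))

/-- Support point of a class `A ⊆ Hol(𝔹ⁿ,ℂⁿ)`. -/
def IsSupportPoint (n : ℕ) (A : Set (En n → En n)) (g : En n → En n) : Prop :=
  g ∈ A ∧ ∃ L : (En n → En n) → ℂ, ContLinFunctional n L ∧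
    (∃ f₁ ∈ A, ∃ f₂ ∈ A, L f₁ ≠ L f₂) ∧
    ∀ h ∈ A, (L h).re ≤ (L g).re

/-- Polynomial maps `ℂⁿ → ℂⁿ`. -/
def IsPolyMap (n : ℕ) (P : En n → En n) : Prop :=
  ∀ i : Fin n, ∃ p : MvPolynomial (Fin n) ℂ,
    ∀ z : En n, P z i = MvPolynomial.eval (fun j => z j) p

/-- The Runge property of the domains `φ_{0,t}(𝔹ⁿ)` (Arosio–Bracci–Wold). -/
def RungeProp (n : ℕ) (φ : ℝ → ℝ → En n → En n) : Prop :=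
  ∀ t : ℝ, 0 ≤ t → ∀ g : En n → En n, DifferentiableOn ℂ g (𝔹 n) → g 0 = 0 →
    fderiv ℂ g 0 = 0 →
    ∃ P : ℕ → En n → En n,
      (∀ k, IsPolyMap n (P k) ∧ P k 0 = 0 ∧ fderiv ℂ (P k) 0 = 0) ∧
      TendstoLocallyUniformlyOn (fun k z => P k (φ 0 t z)) g atTop (𝔹 n)
open ComplexConjugate
open scoped Interval

def Bb (ρ : ℝ) : ℝ := ρ ^ 2 * (1 + ρ) / (1 - ρ)

def Mb (r : ℝ) : ℝ := (2 / (1 - r)) * Bb ((1 + r) / 2)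

def Lb (r : ℝ) : ℝ := (2 * Mb ((1 + r) / 2) + 1) / ((1 - r) / 2)

lemma Bb_nonneg {ρ : ℝ} (h0 : 0 ≤ ρ) (h1 : ρ < 1) : 0 ≤ Bb ρ := by
  have h2 : 0 < 1 - ρ := by linarith
  unfold Bb; positivity

lemma Bb_mono {x y : ℝ} (hx : 0 ≤ x) (hxy : x ≤ y) (hy : y < 1) : Bb x ≤ Bb y := by
  unfold Bb
  have h1 : 0 < 1 - y := by linarith
  have h2 : 0 < 1 - x := by linarith
  rw [div_le_div_iff₀ h2 h1]
  nlinarith [mul_nonneg hx (sub_nonneg.2 hxy), mul_nonneg (mul_nonneg hx hx) (sub_nonneg.2 hxy),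
    mul_nonneg (mul_nonneg hx hx) hx, sq_nonneg (x - y), sq_nonneg (x + y),
    mul_nonneg (sub_nonneg.2 hxy) (sub_nonneg.2 hy.le)]

lemma Mb_nonneg {r : ℝ} (h0 : 0 ≤ r) (h1 : r < 1) : 0 ≤ Mb r := by
  have : 0 ≤ Bb ((1 + r) / 2) := Bb_nonneg (by linarith) (by linarith)
  have h2 : 0 < 1 - r := by linarith
  unfold Mb; positivity

/-- The Carathéodory-type radial estimate for the class `ℳₙ`. -/
lemma classM_inner_bound {n : ℕ} {h : En n → En n} (hh : h ∈ ClassM n) {w : En n}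
    (hw : w ∈ 𝔹 n) : ‖(inner ℂ (h w) w : ℂ)‖ ≤ Bb ‖w‖ := by
  obtain ⟨hdiff, h0, hder, hre⟩ := hh
  have hw1 : ‖w‖ < 1 := mem_ball_zero_iff.1 hw
  rcases eq_or_ne w 0 with rfl | hw0
  · simp [h0, Bb]
  have hc0 : (0:ℝ) < ‖w‖ := norm_pos_iff.2 hw0
  set c : ℝ := ‖w‖ with hc
  have hcc : ((c:ℂ)) ≠ 0 := Complex.ofReal_ne_zero.2 hc0.ne'
  set u : En n := ((c:ℂ))⁻¹ • w with hu
  have hun : ‖u‖ = 1 := by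
    rw [hu, norm_smul, norm_inv, Complex.norm_real, Real.norm_eq_abs, abs_of_pos hc0]
    field_simp
    exact hc.symm
  have hmem : ∀ ζ : ℂ, ζ ∈ ball (0:ℂ) 1 → ζ • u ∈ 𝔹 n := by
    intro ζ hζ
    have h1 := mem_ball_zero_iff.1 hζ
    rw [𝔹, mem_ball_zero_iff, norm_smul, hun, mul_one]
    exact h1
  set a : ℂ → ℂ := fun ζ => inner ℂ u (h (ζ • u)) with ha
  have ha0 : a 0 = 0 := by simp [ha, h0]
  have hsm : ∀ ζ : ℂ, DifferentiableAt ℂ (fun ζ : ℂ => ζ • u) ζ :=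
    fun ζ => (differentiable_id.smul_const u) ζ
  have h1diff : DifferentiableOn ℂ (fun ζ : ℂ => h (ζ • u)) (ball 0 1) :=
    hdiff.comp ((differentiable_id.smul_const u).differentiableOn) hmem
  have hadiff : DifferentiableOn ℂ a (ball 0 1) :=
    (innerSL ℂ u).differentiable.comp_differentiableOn h1diff
  have hd1 : HasDerivAt (fun ζ : ℂ => ζ • u) u 0 := by
    simpa using (hasDerivAt_id (0:ℂ)).smul_const u
  have hdAt : DifferentiableAt ℂ h 0 := by
    have h0b : (0 : En n) ∈ 𝔹 n := mem_ball_self one_pos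
    exact hdiff.differentiableAt ((isOpen_ball).mem_nhds h0b)
  have hfd : HasFDerivAt h (-(1 : En n →L[ℂ] En n)) 0 := hder ▸ hdAt.hasFDerivAt
  have hd2 : HasDerivAt (fun ζ : ℂ => h (ζ • u)) (-u) 0 := by
    have hfd' : HasFDerivAt h (-(1 : En n →L[ℂ] En n)) ((fun ζ : ℂ => ζ • u) 0) := by
      simpa using hfd
    exact hfd'.comp_hasDerivAt 0 hd1
  have hd3 : HasDerivAt a (inner ℂ u (-u) : ℂ) 0 :=
    (innerSL ℂ u).hasFDerivAt.comp_hasDerivAt 0 hd2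
  have hderiva : deriv a 0 = -1 := by
    rw [hd3.deriv, inner_neg_right, inner_self_eq_norm_sq_to_K, hun]
    norm_num
  set p : ℂ → ℂ := fun ζ => -(dslope a 0 ζ) with hp
  have hp0 : p 0 = 1 := by
    show -(dslope a 0 0) = 1
    rw [dslope_same, hderiva]; norm_num
  have hpdiff : DifferentiableOn ℂ p (ball 0 1) :=
    ((Complex.differentiableOn_dslope ((isOpen_ball).mem_nhds (mem_ball_self one_pos))).2
      hadiff).neg
  have hpre : ∀ ζ ∈ ball (0:ℂ) 1, 0 ≤ (p ζ).re := by
    intro ζ hζ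
    rcases eq_or_ne ζ 0 with rfl | hζ0
    · rw [hp0]; norm_num
    · have hz' := hre (ζ • u) (hmem ζ hζ)
      have key : (inner ℂ (h (ζ • u)) (ζ • u) : ℂ) = ζ * conj (a ζ) := by
        rw [inner_smul_right]
        congr 1
        exact (inner_conj_symm _ _).symm
      have h2 : (ζ * conj (a ζ)).re ≤ 0 := by rw [← key]; exact hz'
      have hps : p ζ = -(a ζ / ζ) := by
        show -(dslope a 0 ζ) = -(a ζ / ζ)
        rw [dslope_of_ne _ hζ0, slope_def_field, ha0, sub_zero, sub_zero]
      have hdiv : a ζ / ζ = (((Complex.normSq ζ)⁻¹ : ℝ) : ℂ) * (a ζ * conj ζ) := by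
        rw [div_eq_mul_inv, Complex.inv_def]; push_cast; ring
      have hconj : (a ζ * conj ζ).re = (ζ * conj (a ζ)).re := by
        have : a ζ * conj ζ = conj (ζ * conj (a ζ)) := by
          rw [map_mul, Complex.conj_conj, mul_comm]
        rw [this, Complex.conj_re]
      rw [hps]
      have : (a ζ / ζ).re ≤ 0 := by
        rw [hdiv, Complex.re_ofReal_mul, hconj]
        have hnn : (0:ℝ) ≤ (Complex.normSq ζ)⁻¹ := inv_nonneg.2 (Complex.normSq_nonneg ζ)
        exact mul_nonpos_of_nonneg_of_nonpos hnn h2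
      simpa using this
  set q : ℂ → ℂ := fun ζ => (p ζ - 1) / (p ζ + 1) with hqdef
  have hne : ∀ ζ ∈ ball (0:ℂ) 1, p ζ + 1 ≠ 0 := by
    intro ζ hζ h0'
    have h1 := hpre ζ hζ
    have h2 : (p ζ + 1).re = (p ζ).re + 1 := by simp
    rw [h0'] at h2; simp at h2; linarith
  have hq0 : q 0 = 0 := by rw [hqdef]; simp [hp0]
  have hqdiff : DifferentiableOn ℂ q (ball 0 1) :=
    (hpdiff.sub (differentiableOn_const 1)).div (hpdiff.add (differentiableOn_const 1)) hne
  have hqle : ∀ ζ ∈ ball (0:ℂ) 1, ‖q ζ‖ ≤ 1 := by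
    intro ζ hζ
    have hd := hpre ζ hζ
    have hnsq : Complex.normSq (p ζ - 1) ≤ Complex.normSq (p ζ + 1) := by
      simp only [Complex.normSq_apply, Complex.sub_re, Complex.sub_im, Complex.add_re,
        Complex.add_im, Complex.one_re, Complex.one_im]
      nlinarith
    have habs : ‖p ζ - 1‖ ≤ ‖p ζ + 1‖ := by
      rw [Complex.norm_def, Complex.norm_def]
      exact Real.sqrt_le_sqrt hnsq
    rw [hqdef]
    simp only [norm_div]
    have hpos : 0 < ‖p ζ + 1‖ := norm_pos_iff.2 (hne ζ hζ)
    rw [div_le_one hpos]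
    exact habs
  have hqball : ∀ ζ ∈ ball (0:ℂ) 1, ‖q ζ‖ ≤ ‖ζ‖ := by
    intro ζ hζ
    by_contra hlt
    push_neg at hlt
    have hq0' : 0 < ‖q ζ‖ := lt_of_le_of_lt (norm_nonneg ζ) hlt
    obtain ⟨t, ht1, ht2⟩ := exists_between ((div_lt_one hq0').2 hlt)
    have ht0 : 0 < t := lt_of_le_of_lt (div_nonneg (norm_nonneg ζ) hq0'.le) ht1
    have hmaps : MapsTo (fun ξ => (t:ℂ) * q ξ) (ball (0:ℂ) 1) (ball (0:ℂ) 1) := by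
      intro ξ hξ
      rw [mem_ball_zero_iff, norm_mul, Complex.norm_real, Real.norm_eq_abs, abs_of_pos ht0]
      calc t * ‖q ξ‖ ≤ t * 1 := by
            exact mul_le_mul_of_nonneg_left (hqle ξ hξ) ht0.le
        _ < 1 := by rw [mul_one]; exact ht2
    have hdt : DifferentiableOn ℂ (fun ξ => (t:ℂ) * q ξ) (ball (0:ℂ) 1) :=
      (differentiableOn_const _).mul hqdiff
    have h00 : (fun ξ => (t:ℂ) * q ξ) 0 = 0 := by simp [hq0]
    have := Complex.norm_le_norm_of_mapsTo_ball hdt (hmaps.mono_right ball_subset_closedBall) h00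
      (mem_ball_zero_iff.1 hζ)
    rw [norm_mul] at this
    have h2 : t * ‖q ζ‖ ≤ ‖ζ‖ := by
      simpa [Complex.norm_real, abs_of_pos ht0] using this
    have : t ≤ ‖ζ‖ / ‖q ζ‖ := (le_div_iff₀ hq0').2 h2
    linarith
  -- evaluate at ζ₀ = c
  have hζ0m : ((c:ℂ)) ∈ ball (0:ℂ) 1 := by
    rw [mem_ball_zero_iff, Complex.norm_real, Real.norm_eq_abs, abs_of_pos hc0]
    exact hw1
  have hqc := hqball _ hζ0m
  have hqcn : ‖q (c:ℂ)‖ ≤ c := by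
    rwa [Complex.norm_real, Real.norm_eq_abs, abs_of_pos hc0] at hqc
  have hqc1 : ‖q (c:ℂ)‖ < 1 := lt_of_le_of_lt hqcn hw1
  have hmul : q (c:ℂ) * (p (c:ℂ) + 1) = p (c:ℂ) - 1 :=
    div_mul_cancel₀ _ (hne _ hζ0m)
  have h1mq : (1:ℂ) - q (c:ℂ) ≠ 0 := by
    intro hq1
    have : q (c:ℂ) = 1 := by linear_combination -hq1
    rw [this] at hqc1; simp at hqc1
  have hpeq : p (c:ℂ) = (1 + q (c:ℂ)) / (1 - q (c:ℂ)) := by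
    rw [eq_div_iff h1mq]
    linear_combination -hmul
  have hpnorm : ‖p (c:ℂ)‖ ≤ (1 + c) / (1 - c) := by
    rw [hpeq, norm_div]
    have h1 : ‖(1:ℂ) + q (c:ℂ)‖ ≤ 1 + c := by
      calc ‖(1:ℂ) + q (c:ℂ)‖ ≤ ‖(1:ℂ)‖ + ‖q (c:ℂ)‖ := norm_add_le _ _
        _ ≤ 1 + c := by rw [norm_one]; linarith
    have h2 : 1 - c ≤ ‖(1:ℂ) - q (c:ℂ)‖ := by
      calc 1 - c ≤ ‖(1:ℂ)‖ - ‖q (c:ℂ)‖ := by rw [norm_one]; linarith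
        _ ≤ ‖(1:ℂ) - q (c:ℂ)‖ := norm_sub_norm_le _ _
    have hc1 : (0:ℝ) < 1 - c := by linarith
    exact div_le_div₀ (by linarith) h1 hc1 h2
  -- from dslope identity: a c = -(c * p c)
  have hac : a (c:ℂ) = ((c:ℂ)) * (-(p (c:ℂ))) := by
    have hss := sub_smul_dslope a 0 (c:ℂ)
    rw [sub_zero, ha0, sub_zero] at hss
    have hpc : p (c:ℂ) = -(dslope a 0 (c:ℂ)) := rfl
    rw [← hss, hpc, smul_eq_mul]
    ring
  have hwu : ((c:ℂ)) • u = w := by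
    rw [hu, smul_smul, mul_inv_cancel₀ hcc, one_smul]
  have hinner : (inner ℂ (h w) w : ℂ) = (c:ℂ) * conj (a (c:ℂ)) := by
    conv_lhs => rw [← hwu]
    rw [inner_smul_right]
    congr 1
    rw [show a (c:ℂ) = (inner ℂ u (h ((c:ℂ) • u)) : ℂ) from rfl, inner_conj_symm]
  rw [hinner]
  rw [norm_mul, Complex.norm_real, Real.norm_eq_abs, abs_of_pos hc0]
  have hnconj : ‖(conj (a (c:ℂ)) : ℂ)‖ = ‖a (c:ℂ)‖ := RCLike.norm_conj _
  rw [hnconj, hac, norm_mul, Complex.norm_real, Real.norm_eq_abs, abs_of_pos hc0, norm_neg]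
  have hfin : c * (c * ‖p (c:ℂ)‖) ≤ c * (c * ((1 + c) / (1 - c))) := by
    have := mul_le_mul_of_nonneg_left hpnorm hc0.le
    exact mul_le_mul_of_nonneg_left this hc0.le
  calc c * (c * ‖p (c:ℂ)‖) ≤ c * (c * ((1 + c) / (1 - c))) := hfin
    _ = Bb c := by rw [Bb]; ring

private lemma circleIntegral_add' {f g : ℂ → ℂ} {c : ℂ} {R : ℝ} (hf : CircleIntegrable f c R)
    (hg : CircleIntegrable g c R) :
    (∮ z in C(c,R), (f z + g z)) = (∮ z in C(c,R), f z) + ∮ z in C(c,R), g z := by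
  simp only [circleIntegral, smul_add]
  exact intervalIntegral.integral_add hf.out hg.out

/-- Uniform bound for the class `ℳₙ` on balls of radius `r < 1`. -/
lemma classM_norm_bound {n : ℕ} {h : En n → En n} (hh : h ∈ ClassM n) {r : ℝ}
    (hr0 : 0 ≤ r) (hr : r < 1) {z : En n} (hz : ‖z‖ ≤ r) : ‖h z‖ ≤ Mb r := by
  rcases eq_or_ne (h z) 0 with hz0 | hz0
  · rw [hz0, norm_zero]; exact Mb_nonneg hr0 hr
  have hhz0 : (0:ℝ) < ‖h z‖ := norm_pos_iff.2 hz0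
  set δ : ℝ := (1 - r) / 2 with hδ
  have hδ0 : 0 < δ := by rw [hδ]; linarith
  have hzb : z ∈ 𝔹 n := by rw [𝔹, mem_ball_zero_iff]; linarith
  set v : En n := ((‖h z‖ : ℂ))⁻¹ • h z with hv
  have hvn : ‖v‖ = 1 := by
    rw [hv, norm_smul, norm_inv, Complex.norm_real, Real.norm_eq_abs, abs_of_pos hhz0]
    field_simp
  set g : ℂ → En n := fun ω => z + ((δ:ℂ) * ω) • v with hg
  have hgn : ∀ ω : ℂ, ‖g ω‖ ≤ r + δ * ‖ω‖ := by
    intro ω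
    calc ‖z + ((δ:ℂ) * ω) • v‖ ≤ ‖z‖ + ‖((δ:ℂ) * ω) • v‖ := norm_add_le _ _
      _ = ‖z‖ + δ * ‖ω‖ := by
          rw [norm_smul, hvn, mul_one, norm_mul, Complex.norm_real, Real.norm_eq_abs,
            abs_of_pos hδ0]
      _ ≤ r + δ * ‖ω‖ := by linarith
  have hgmem : ∀ ω : ℂ, ω ∈ ball (0:ℂ) (3/2) → g ω ∈ 𝔹 n := by
    intro ω hω
    have hω' : ‖ω‖ < 3/2 := mem_ball_zero_iff.1 hω
    rw [𝔹, mem_ball_zero_iff]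
    have := hgn ω
    have : ‖g ω‖ ≤ r + δ * (3/2) := by nlinarith
    rw [hδ] at this; linarith [this]
  have hgball : ∀ ω : ℂ, ω ∈ sphere (0:ℂ) 1 → ‖g ω‖ ≤ (1 + r) / 2 := by
    intro ω hω
    have hω' : ‖ω‖ = 1 := by simpa using mem_sphere_zero_iff_norm.1 hω
    have := hgn ω
    rw [hω', mul_one, hδ] at this; linarith
  have hgdiff : ∀ ω : ℂ, DifferentiableAt ℂ g ω := by
    intro ω
    exact (differentiableAt_const z).add
      (((differentiableAt_const ((δ:ℂ))).mul differentiableAt_id).smul_const v)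
  have hcomp : ∀ ω ∈ ball (0:ℂ) (3/2), DifferentiableAt ℂ (fun ω => h (g ω)) ω := by
    intro ω hω
    exact (hh.1.differentiableAt ((isOpen_ball).mem_nhds (hgmem ω hω))).comp ω (hgdiff ω)
  set F1 : ℂ → ℂ := fun ω => inner ℂ z (h (g ω)) with hF1
  set F2 : ℂ → ℂ := fun ω => inner ℂ v (h (g ω)) with hF2
  have hF1d : ∀ ω ∈ ball (0:ℂ) (3/2), DifferentiableAt ℂ F1 ω := by
    intro ω hω
    exact ((innerSL ℂ z).differentiableAt).comp ω (hcomp ω hω)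
  have hF2d : ∀ ω ∈ ball (0:ℂ) (3/2), DifferentiableAt ℂ F2 ω := by
    intro ω hω
    exact ((innerSL ℂ v).differentiableAt).comp ω (hcomp ω hω)
  have hsub : closedBall (0:ℂ) 1 ⊆ ball (0:ℂ) (3/2) :=
    closedBall_subset_ball (by norm_num)
  have hF1c : ContinuousOn F1 (closedBall (0:ℂ) 1) :=
    fun ω hω => ((hF1d ω (hsub hω)).continuousAt).continuousWithinAt
  have hF2c : ContinuousOn F2 (closedBall (0:ℂ) 1) :=
    fun ω hω => ((hF2d ω (hsub hω)).continuousAt).continuousWithinAt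
  have I1 : (∮ ω in C((0:ℂ), 1), F1 ω) = 0 :=
    Complex.circleIntegral_eq_zero_of_differentiable_on_off_countable (by norm_num)
      countable_empty hF1c (fun ω hω => hF1d ω (ball_subset_ball (by norm_num) hω.1))
  have I2 : (∮ ω in C((0:ℂ), 1), (ω - 0)⁻¹ • F2 ω) = (2 * Real.pi * Complex.I : ℂ) • F2 0 :=
    Complex.circleIntegral_sub_inv_smul_of_differentiable_on_off_countable countable_empty
      (mem_ball_self one_pos) hF2c (fun ω hω => hF2d ω (ball_subset_ball (by norm_num) hω.1))
  have hci1 : CircleIntegrable F1 0 1 := hF1c.mono sphere_subset_closedBall |>.circleIntegrable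
    (by norm_num)
  have hinv : ContinuousOn (fun ω : ℂ => (ω - 0)⁻¹) (sphere (0:ℂ) 1) := by
    apply ContinuousOn.inv₀
    · exact (continuous_id.sub continuous_const).continuousOn
    · intro x hx
      have hx1 : ‖x‖ = 1 := by simpa using mem_sphere_zero_iff_norm.1 hx
      intro h0
      rw [sub_zero] at h0; rw [h0] at hx1; simp at hx1
  have hci2 : CircleIntegrable (fun ω => (ω - 0)⁻¹ • F2 ω) 0 1 :=
    ContinuousOn.circleIntegrable (by norm_num)
      (hinv.smul (hF2c.mono sphere_subset_closedBall))
  have hci3 : CircleIntegrable (fun ω => (δ:ℂ) • ((ω - 0)⁻¹ • F2 ω)) 0 1 :=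
    ContinuousOn.circleIntegrable (by norm_num)
      ((hinv.smul (hF2c.mono sphere_subset_closedBall)).const_smul (δ:ℂ))
  set Q : ℂ → ℂ := fun ω => F1 ω + (δ:ℂ) • ((ω - 0)⁻¹ • F2 ω) with hQ
  have IQ : (∮ ω in C((0:ℂ),1), Q ω) =
      (δ:ℂ) • ((2 * Real.pi * Complex.I : ℂ) • F2 0) := by
    have h1 := circleIntegral_add' hci1 hci3
    have h2 := circleIntegral.integral_smul ((δ:ℂ)) (fun ω => (ω - 0)⁻¹ • F2 ω) (0:ℂ) 1
    calc (∮ ω in C((0:ℂ),1), Q ω)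
        = (∮ ω in C((0:ℂ),1), F1 ω) + ∮ ω in C((0:ℂ),1), (δ:ℂ) • ((ω - 0)⁻¹ • F2 ω) := h1
      _ = (δ:ℂ) • ∮ ω in C((0:ℂ),1), (ω - 0)⁻¹ • F2 ω := by rw [I1, zero_add, h2]
      _ = (δ:ℂ) • ((2 * Real.pi * Complex.I : ℂ) • F2 0) := by rw [I2]
  have hQb : ∀ ω ∈ sphere (0:ℂ) 1, ‖Q ω‖ ≤ Bb ((1 + r) / 2) := by
    intro ω hω
    have hω1 : ‖ω‖ = 1 := by simpa using mem_sphere_zero_iff_norm.1 hω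
    have hω0 : ω ≠ 0 := by intro h0; rw [h0] at hω1; simp at hω1
    have hnsq : Complex.normSq ω = 1 := by
      rw [Complex.normSq_eq_norm_sq, hω1]; norm_num
    have hconj : (conj ω : ℂ) = ω⁻¹ := by
      rw [Complex.inv_def, hnsq]; simp
    have hQeq : Q ω = (inner ℂ (g ω) (h (g ω)) : ℂ) := by
      have hgin : (inner ℂ (g ω) (h (g ω)) : ℂ)
          = inner ℂ z (h (g ω)) + conj ((δ:ℂ) * ω) * inner ℂ v (h (g ω)) := by
        rw [hg]
        simp only [inner_add_left, inner_smul_left]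
      rw [hQ, hgin]
      simp only [map_mul, Complex.conj_ofReal, hconj, hF1, hF2, sub_zero, smul_eq_mul]
      ring
    rw [hQeq]
    calc ‖(inner ℂ (g ω) (h (g ω)) : ℂ)‖ = ‖(inner ℂ (h (g ω)) (g ω) : ℂ)‖ := norm_inner_symm _ _
      _ ≤ Bb ‖g ω‖ := classM_inner_bound hh (hgmem ω (hsub (sphere_subset_closedBall hω)))
      _ ≤ Bb ((1 + r) / 2) := Bb_mono (norm_nonneg _) (hgball ω hω) (by linarith)
  have hQle := circleIntegral.norm_integral_le_of_norm_le_const (by norm_num : (0:ℝ) ≤ 1) hQb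
  rw [IQ] at hQle
  have hg0 : g 0 = z := by rw [hg]; simp
  have hF20 : F2 0 = (‖h z‖ : ℂ) := by
    have : F2 0 = (inner ℂ v (h z) : ℂ) := by rw [hF2]; simp only [hg0]
    rw [this, hv, inner_smul_left, inner_self_eq_norm_sq_to_K, map_inv₀, Complex.conj_ofReal]
    field_simp
    rw [sq]; exact mul_div_cancel_right₀ _ (Complex.ofReal_ne_zero.2 hhz0.ne')
  have hnormI : ‖(2 * Real.pi * Complex.I : ℂ)‖ = 2 * Real.pi := by
    simp [abs_of_pos Real.pi_pos]
  have hlhs : ‖(δ:ℂ) • ((2 * Real.pi * Complex.I : ℂ) • F2 0)‖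
      = δ * (2 * Real.pi * ‖h z‖) := by
    rw [norm_smul, norm_smul, hnormI, hF20, Complex.norm_real, Real.norm_eq_abs,
      abs_of_pos hδ0, Complex.norm_real, Real.norm_eq_abs, abs_of_pos hhz0]
  rw [hlhs] at hQle
  have hπ : (0:ℝ) < 2 * Real.pi := by positivity
  have hfin : δ * ‖h z‖ ≤ Bb ((1 + r) / 2) := by nlinarith [Real.pi_pos]
  have : ‖h z‖ ≤ Bb ((1 + r) / 2) / δ := (le_div_iff₀ hδ0).2 (by linarith [hfin])
  calc ‖h z‖ ≤ Bb ((1 + r) / 2) / δ := this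
    _ = Mb r := by rw [Mb, hδ]; field_simp

lemma Lb_eq (r : ℝ) : Lb r = (2 * Mb ((1 + r) / 2) + 1) / ((1 - r) / 2) := rfl

lemma Lb_nonneg {r : ℝ} (hr0 : 0 ≤ r) (hr : r < 1) : 0 ≤ Lb r := by
  have h1 : 0 ≤ Mb ((1 + r) / 2) := Mb_nonneg (by linarith) (by linarith)
  have h2 : 0 < (1 - r) / 2 := by linarith
  rw [Lb_eq]; positivity

/-- Lipschitz estimate for the class `ℳₙ` on balls of radius `r < 1`. -/
lemma classM_lip {n : ℕ} {h : En n → En n} (hh : h ∈ ClassM n) {r : ℝ}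
    (hr0 : 0 ≤ r) (hr : r < 1) {w w' : En n} (hw : ‖w‖ ≤ r) (hw' : ‖w'‖ ≤ r) :
    ‖h w - h w'‖ ≤ Lb r * ‖w - w'‖ := by
  have hr''1 : (1 + r) / 2 < 1 := by linarith
  have hr''0 : (0:ℝ) ≤ (1 + r) / 2 := by linarith
  have hR₁0 : (0:ℝ) < (1 - r) / 2 := by linarith
  have hMb : 0 ≤ Mb ((1 + r) / 2) := Mb_nonneg hr''0 hr''1
  have hbound : ∀ x : En n, ‖x‖ ≤ r → ‖fderiv ℂ h x‖ ≤ Lb r := by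
    intro x hx
    have hxb : x ∈ 𝔹 n := by rw [𝔹, mem_ball_zero_iff]; linarith
    apply ContinuousLinearMap.opNorm_le_bound _ (Lb_nonneg hr0 hr)
    intro y
    rcases eq_or_ne y 0 with rfl | hy0
    · simp
    have hyn : (0:ℝ) < ‖y‖ := norm_pos_iff.2 hy0
    set e : En n := ((‖y‖:ℂ))⁻¹ • y with he
    have hen : ‖e‖ = 1 := by
      rw [he, norm_smul, norm_inv, Complex.norm_real, Real.norm_eq_abs, abs_of_pos hyn]
      field_simp
    have hlin : ∀ ζ : ℂ, ‖x + ζ • e‖ ≤ r + ‖ζ‖ := by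
      intro ζ
      calc ‖x + ζ • e‖ ≤ ‖x‖ + ‖ζ • e‖ := norm_add_le _ _
        _ = ‖x‖ + ‖ζ‖ := by rw [norm_smul, hen, mul_one]
        _ ≤ r + ‖ζ‖ := by linarith
    have hmem : ∀ ζ : ℂ, ζ ∈ ball (0:ℂ) ((1 - r) / 2) → x + ζ • e ∈ 𝔹 n := by
      intro ζ hζ
      have h1 := mem_ball_zero_iff.1 hζ
      rw [𝔹, mem_ball_zero_iff]
      have := hlin ζ
      linarith
    set gv : ℂ → En n := fun ζ => h (x + ζ • e) with hgv
    have hgd : DifferentiableOn ℂ gv (ball 0 ((1 - r) / 2)) := by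
      apply hh.1.comp _ hmem
      exact ((differentiable_const x).add (differentiable_id.smul_const e)).differentiableOn
    have hgv0 : gv 0 = h x := by rw [hgv]; simp
    have hmaps : MapsTo gv (ball (0:ℂ) ((1 - r) / 2)) (ball (gv 0) (2 * Mb ((1 + r) / 2) + 1)) := by
      intro ζ hζ
      have h1 := mem_ball_zero_iff.1 hζ
      have hb1 : ‖gv ζ‖ ≤ Mb ((1 + r) / 2) := by
        apply classM_norm_bound hh hr''0 hr''1
        have := hlin ζ
        linarith
      have hb2 : ‖gv 0‖ ≤ Mb ((1 + r) / 2) := by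
        rw [hgv0]
        exact classM_norm_bound hh hr''0 hr''1 (by linarith)
      rw [mem_ball]
      calc dist (gv ζ) (gv 0) ≤ ‖gv ζ‖ + ‖gv 0‖ := by
            rw [dist_eq_norm]; exact norm_sub_le _ _
        _ < 2 * Mb ((1 + r) / 2) + 1 := by linarith
    have hder := Complex.norm_deriv_le_div_of_mapsTo_ball hgd (hmaps.mono_right ball_subset_closedBall) hR₁0
    have hxd : DifferentiableAt ℂ h x := hh.1.differentiableAt ((isOpen_ball).mem_nhds hxb)
    have hdg : HasDerivAt gv ((fderiv ℂ h x) e) 0 := by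
      have h1 : HasDerivAt (fun ζ : ℂ => x + ζ • e) e 0 := by
        simpa using (hasDerivAt_id (0:ℂ)).smul_const e
      have h2 : HasFDerivAt h (fderiv ℂ h x) ((fun ζ : ℂ => x + ζ • e) 0) := by
        simpa using hxd.hasFDerivAt
      exact h2.comp_hasDerivAt 0 h1
    rw [hdg.deriv] at hder
    have hye : ((‖y‖:ℂ)) • e = y := by
      rw [he, smul_smul, mul_inv_cancel₀ (Complex.ofReal_ne_zero.2 hyn.ne'), one_smul]
    calc ‖(fderiv ℂ h x) y‖ = ‖(fderiv ℂ h x) (((‖y‖:ℂ)) • e)‖ := by rw [hye]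
      _ = ‖y‖ * ‖(fderiv ℂ h x) e‖ := by
          rw [_root_.map_smul, norm_smul, Complex.norm_real, Real.norm_eq_abs, abs_of_pos hyn]
      _ ≤ ‖y‖ * ((2 * Mb ((1 + r) / 2) + 1) / ((1 - r) / 2)) :=
          mul_le_mul_of_nonneg_left hder hyn.le
      _ = Lb r * ‖y‖ := by rw [Lb_eq]; ring
  have hconv : Convex ℝ (closedBall (0 : En n) r) := convex_closedBall 0 r
  have hdiff' : ∀ x ∈ closedBall (0 : En n) r, DifferentiableAt ℂ h x := by
    intro x hx
    have : ‖x‖ ≤ r := mem_closedBall_zero_iff.1 hx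
    refine hh.1.differentiableAt ((isOpen_ball).mem_nhds ?_)
    simp only [𝔹, mem_ball_zero_iff]; linarith
  exact hconv.norm_image_sub_le_of_norm_fderiv_le hdiff'
    (fun x hx => hbound x (mem_closedBall_zero_iff.1 hx))
    (mem_closedBall_zero_iff.2 hw') (mem_closedBall_zero_iff.2 hw)

/-- One discrete step of the dissipativity estimate. -/
lemma norm_sq_step {n : ℕ} {f ψ : ℝ → En n} {M x y : ℝ}
    (hxy : x ≤ y)
    (hint : IntervalIntegrable f volume x y)
    (heq : ∀ t ∈ Icc x y, ψ t = ψ x + ∫ τ in x..t, f τ)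
    (hM : 0 ≤ M)
    (hbd : ∀ᵐ τ ∂volume, τ ∈ Ioc x y → ‖f τ‖ ≤ M)
    (hdis : ∀ᵐ τ ∂volume, τ ∈ Ioc x y → (inner ℂ (f τ) (ψ τ) : ℂ).re ≤ 0) :
    ‖ψ y‖^2 ≤ ‖ψ x‖^2 + 3 * M^2 * (y - x)^2 := by
  set D : En n := ∫ τ in x..y, f τ with hD
  have hψy : ψ y = ψ x + D := heq y ⟨hxy, le_rfl⟩
  have hDle : ‖D‖ ≤ M * (y - x) := by
    have h1 : ∀ᵐ τ ∂volume, τ ∈ Ι x y → ‖f τ‖ ≤ M := by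
      rw [uIoc_of_le hxy]; exact hbd
    have := intervalIntegral.norm_integral_le_of_norm_le_const_ae h1
    rwa [abs_of_nonneg (by linarith)] at this
  have hIc : IntervalIntegrable (fun τ => (inner ℂ (ψ x) (f τ) : ℂ)) volume x y :=
    ⟨(innerSL ℂ (ψ x)).integrable_comp hint.1, (innerSL ℂ (ψ x)).integrable_comp hint.2⟩
  have hintre : IntervalIntegrable (fun τ => (inner ℂ (ψ x) (f τ) : ℂ).re) volume x y :=
    ⟨(Complex.reCLM).integrable_comp hIc.1, (Complex.reCLM).integrable_comp hIc.2⟩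
  have hinner : (inner ℂ (ψ x) D : ℂ).re ≤ M^2 * (y - x) * (y - x) := by
    have hI : (inner ℂ (ψ x) D : ℂ) = ∫ τ in x..y, (inner ℂ (ψ x) (f τ) : ℂ) :=
      ((innerSL ℂ (ψ x)).intervalIntegral_comp_comm hint).symm
    have hre : (inner ℂ (ψ x) D : ℂ).re = ∫ τ in x..y, ((inner ℂ (ψ x) (f τ) : ℂ).re) := by
      rw [hI]
      exact ((Complex.reCLM).intervalIntegral_comp_comm hIc).symm
    rw [hre]
    have hconst : IntervalIntegrable (fun _ : ℝ => M^2 * (y - x)) volume x y :=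
      intervalIntegrable_const
    have hae : (fun τ => (inner ℂ (ψ x) (f τ) : ℂ).re)
        ≤ᵐ[volume.restrict (Icc x y)] (fun _ => M^2 * (y - x)) := by
      have h1 : ∀ᵐ τ ∂volume.restrict (Icc x y), τ ∈ Icc x y :=
        ae_restrict_mem measurableSet_Icc
      have h2 : ∀ᵐ τ ∂volume.restrict (Icc x y), (τ ∈ Ioc x y → ‖f τ‖ ≤ M) :=
        ae_restrict_of_ae hbd
      have h3 : ∀ᵐ τ ∂volume.restrict (Icc x y),
          (τ ∈ Ioc x y → (inner ℂ (f τ) (ψ τ) : ℂ).re ≤ 0) := ae_restrict_of_ae hdis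
      have h4 : ∀ᵐ τ ∂volume.restrict (Icc x y), τ ≠ x := by
        refine ae_iff.2 ?_
        have h41 : {τ : ℝ | ¬ τ ≠ x} = {x} := by ext τ; simp
        rw [h41, Measure.restrict_apply' measurableSet_Icc]
        exact measure_mono_null inter_subset_left Real.volume_singleton
      filter_upwards [h1, h2, h3, h4] with τ ht hb hd hne
      have htIoc : τ ∈ Ioc x y := ⟨lt_of_le_of_ne ht.1 (Ne.symm hne), ht.2⟩
      have hsplit : (inner ℂ (ψ x) (f τ) : ℂ) = inner ℂ (ψ τ) (f τ) + inner ℂ (ψ x - ψ τ) (f τ) := by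
        rw [← inner_add_left]
        congr 1
        abel
      have hψτ : ψ τ = ψ x + ∫ σ in x..τ, f σ := heq τ ⟨htIoc.1.le, htIoc.2⟩
      have hdiffτ : ‖ψ x - ψ τ‖ ≤ M * (τ - x) := by
        rw [hψτ]
        have h5 : ∀ᵐ σ ∂volume, σ ∈ Ι x τ → ‖f σ‖ ≤ M := by
          rw [uIoc_of_le htIoc.1.le]
          filter_upwards [hbd] with σ h hσ
          exact h ⟨hσ.1, le_trans hσ.2 htIoc.2⟩
        have := intervalIntegral.norm_integral_le_of_norm_le_const_ae h5
        rw [abs_of_nonneg (by linarith [htIoc.1.le] : (0:ℝ) ≤ τ - x)] at this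
        calc ‖ψ x - (ψ x + ∫ σ in x..τ, f σ)‖ = ‖∫ σ in x..τ, f σ‖ := by
              rw [show ψ x - (ψ x + ∫ σ in x..τ, f σ) = -(∫ σ in x..τ, f σ) by abel, norm_neg]
          _ ≤ M * (τ - x) := this
      have hrefl : (inner ℂ (ψ τ) (f τ) : ℂ).re ≤ 0 := by
        have h6 := inner_re_symm (𝕜 := ℂ) (ψ τ) (f τ)
        simp only [RCLike.re_to_complex] at h6
        rw [h6]; exact hd htIoc
      have hcs : (inner ℂ (ψ x - ψ τ) (f τ) : ℂ).re ≤ ‖ψ x - ψ τ‖ * ‖f τ‖ := by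
        have h7 := re_inner_le_norm (𝕜 := ℂ) (ψ x - ψ τ) (f τ)
        simpa only [RCLike.re_to_complex] using h7
      have hfτ : ‖f τ‖ ≤ M := hb htIoc
      show (inner ℂ (ψ x) (f τ) : ℂ).re ≤ M ^ 2 * (y - x)
      rw [hsplit, Complex.add_re]
      have : ‖ψ x - ψ τ‖ * ‖f τ‖ ≤ (M * (τ - x)) * M := by
        apply mul_le_mul hdiffτ hfτ (norm_nonneg _)
        exact mul_nonneg hM (by linarith [htIoc.1.le])
      have hτy : τ - x ≤ y - x := by linarith [htIoc.2]
      nlinarith [norm_nonneg (ψ x - ψ τ), norm_nonneg (f τ)]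
    have hle := intervalIntegral.integral_mono_ae_restrict hxy hintre hconst hae
    rw [intervalIntegral.integral_const, smul_eq_mul] at hle
    calc (∫ τ in x..y, ((inner ℂ (ψ x) (f τ) : ℂ).re)) ≤ (y - x) * (M^2 * (y - x)) := hle
      _ = M^2 * (y - x) * (y - x) := by ring
  have hnorm : ‖ψ y‖^2 = ‖ψ x‖^2 + 2 * (inner ℂ (ψ x) D : ℂ).re + ‖D‖^2 := by
    rw [hψy]
    have h7 := @norm_add_sq ℂ _ _ _ _ (ψ x) D
    simpa [RCLike.re_to_complex] using h7
  have hDnn : (0:ℝ) ≤ M * (y - x) := mul_nonneg hM (by linarith)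
  have hD2 : ‖D‖^2 ≤ (M * (y - x))^2 :=
    sq_le_sq' (by linarith [norm_nonneg D]) hDle
  nlinarith [hnorm, hinner, hD2]

/-- Monotonicity of `‖ψ‖` along an integral curve of a dissipative field. -/
lemma norm_mono_of_dissipative {n : ℕ} {f ψ : ℝ → En n} {M a b : ℝ}
    (hab : a ≤ b) (hM : 0 ≤ M)
    (hint : IntervalIntegrable f volume a b)
    (heq : ∀ t ∈ Icc a b, ψ t = ψ a + ∫ τ in a..t, f τ)
    (hbd : ∀ᵐ τ ∂volume, τ ∈ Ioc a b → ‖f τ‖ ≤ M)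
    (hdis : ∀ᵐ τ ∂volume, τ ∈ Ioc a b → (inner ℂ (f τ) (ψ τ) : ℂ).re ≤ 0) :
    ‖ψ b‖ ≤ ‖ψ a‖ := by
  rcases eq_or_lt_of_le hab with rfl | hab'
  · exact le_rfl
  have key : ∀ N : ℕ, 0 < N → ‖ψ b‖^2 ≤ ‖ψ a‖^2 + 3 * M^2 * (b-a)^2 / N := by
    intro N hN
    have hNR : (0:ℝ) < N := by exact_mod_cast hN
    set Δ : ℝ := (b - a) / N with hΔ
    have hΔ0 : 0 < Δ := div_pos (by linarith) hNR
    set c : ℕ → ℝ := fun i => a + i * Δ with hc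
    have hc0 : c 0 = a := by simp [hc]
    have hcN : c N = b := by
      simp only [hc, hΔ]
      field_simp
      ring
    have hcm : ∀ i j : ℕ, i ≤ j → c i ≤ c j := by
      intro i j hij
      simp only [hc]
      have h1 : (i:ℝ) ≤ j := by exact_mod_cast hij
      nlinarith
    have hcIcc : ∀ i : ℕ, i ≤ N → c i ∈ Icc a b := by
      intro i hi
      exact ⟨by rw [← hc0]; exact hcm 0 i (Nat.zero_le _),
             by rw [← hcN]; exact hcm i N hi⟩
    have hstep : ∀ i : ℕ, i < N → ‖ψ (c (i+1))‖^2 - ‖ψ (c i)‖^2 ≤ 3 * M^2 * Δ^2 := by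
      intro i hi
      have hii : c i ≤ c (i+1) := hcm i (i+1) (Nat.le_succ _)
      have hci : c i ∈ Icc a b := hcIcc i hi.le
      have hci1 : c (i+1) ∈ Icc a b := hcIcc (i+1) hi
      have hsubI : Ioc (c i) (c (i+1)) ⊆ Ioc a b := Ioc_subset_Ioc hci.1 hci1.2
      have hint' : IntervalIntegrable f volume (c i) (c (i+1)) := hint.mono_set (by
        rw [uIcc_of_le hii, uIcc_of_le hab]
        exact Icc_subset_Icc hci.1 hci1.2)
      have hinta : IntervalIntegrable f volume a (c i) := hint.mono_set (by
        rw [uIcc_of_le hci.1, uIcc_of_le hab]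
        exact Icc_subset_Icc le_rfl hci.2)
      have heq' : ∀ t ∈ Icc (c i) (c (i+1)), ψ t = ψ (c i) + ∫ τ in (c i)..t, f τ := by
        intro t ht
        have htab : t ∈ Icc a b := ⟨le_trans hci.1 ht.1, le_trans ht.2 hci1.2⟩
        have hintt : IntervalIntegrable f volume (c i) t := hint.mono_set (by
          rw [uIcc_of_le ht.1, uIcc_of_le hab]
          exact Icc_subset_Icc hci.1 htab.2)
        have hadd := intervalIntegral.integral_add_adjacent_intervals hinta hintt
        rw [heq t htab, heq (c i) hci, ← hadd]
        abel
      have hbd' : ∀ᵐ τ ∂volume, τ ∈ Ioc (c i) (c (i+1)) → ‖f τ‖ ≤ M := by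
        filter_upwards [hbd] with τ h hτ; exact h (hsubI hτ)
      have hdis' : ∀ᵐ τ ∂volume, τ ∈ Ioc (c i) (c (i+1)) →
          (inner ℂ (f τ) (ψ τ) : ℂ).re ≤ 0 := by
        filter_upwards [hdis] with τ h hτ; exact h (hsubI hτ)
      have hkey := norm_sq_step hii hint' heq' hM hbd' hdis'
      have hdd : c (i+1) - c i = Δ := by
        simp only [hc]
        push_cast
        ring
      rw [hdd] at hkey
      linarith
    have htel := Finset.sum_range_sub (fun i => ‖ψ (c i)‖^2) N
    have hsum : ∑ i ∈ Finset.range N, (‖ψ (c (i+1))‖^2 - ‖ψ (c i)‖^2)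
        ≤ N * (3 * M^2 * Δ^2) := by
      calc ∑ i ∈ Finset.range N, (‖ψ (c (i+1))‖^2 - ‖ψ (c i)‖^2)
          ≤ ∑ _i ∈ Finset.range N, (3 * M^2 * Δ^2) :=
            Finset.sum_le_sum (fun i hi => hstep i (Finset.mem_range.1 hi))
        _ = N * (3 * M^2 * Δ^2) := by
            rw [Finset.sum_const, Finset.card_range, nsmul_eq_mul]
    rw [htel] at hsum
    simp only [hc0, hcN] at hsum
    have hrw : (N:ℝ) * (3 * M^2 * Δ^2) = 3 * M^2 * (b-a)^2 / N := by
      rw [hΔ]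
      field_simp
    rw [hrw] at hsum
    linarith
  have hsq : ‖ψ b‖^2 ≤ ‖ψ a‖^2 := by
    by_contra hlt
    push_neg at hlt
    set ε : ℝ := ‖ψ b‖^2 - ‖ψ a‖^2 with hε
    have hε0 : 0 < ε := by rw [hε]; linarith
    set C : ℝ := 3 * M^2 * (b-a)^2 with hC
    have hC0 : 0 ≤ C := by rw [hC]; positivity
    obtain ⟨N, hN⟩ := exists_nat_gt (C / ε)
    have hN0 : 0 < N := by
      have h1 : (0:ℝ) ≤ C / ε := div_nonneg hC0 hε0.le
      have : (0:ℝ) < N := lt_of_le_of_lt h1 hN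
      exact_mod_cast this
    have hNR : (0:ℝ) < N := by exact_mod_cast hN0
    have h2 := key N hN0
    have h3 : C < ε * N := by
      have := (div_lt_iff₀ hε0).1 hN
      linarith [this]
    have h4 : ε * N ≤ C := by
      have h5 : ε ≤ C / N := by rw [hε, hC]; linarith
      calc ε * N ≤ (C / N) * N := by exact mul_le_mul_of_nonneg_right h5 hNR.le
        _ = C := by field_simp
    linarith
  calc ‖ψ b‖ = Real.sqrt (‖ψ b‖^2) := (Real.sqrt_sq (norm_nonneg _)).symm
    _ ≤ Real.sqrt (‖ψ a‖^2) := Real.sqrt_le_sqrt hsq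
    _ = ‖ψ a‖ := Real.sqrt_sq (norm_nonneg _)

/-- Bootstrap: along the evolution, the vector field is integrable and the norm is
non-increasing. -/
lemma evolution_integrable {n : ℕ} {G : ℝ → En n → En n} {φ : ℝ → ℝ → En n → En n}
    (hGm : ∀ w ∈ 𝔹 n, StronglyMeasurable fun t : ℝ => G t w)
    {N : Set ℝ} (hNm : MeasurableSet N) (hN0 : volume N = 0)
    (hGN : ∀ t ∈ Ici (0:ℝ) \ N, G t ∈ ClassM n)
    {s : ℝ} (hs0 : 0 ≤ s) {z : En n} (hz : z ∈ 𝔹 n)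
    (hmem : ∀ t : ℝ, s ≤ t → φ s t z ∈ 𝔹 n)
    (heq : ∀ t : ℝ, s ≤ t → φ s t z = z + ∫ τ in s..t, G τ (φ s τ z))
    {t₀ : ℝ} (ht₀ : s ≤ t₀) :
    IntervalIntegrable (fun τ => G τ (φ s τ z)) volume s t₀ ∧
      ∀ t ∈ Icc s t₀, ‖φ s t z‖ ≤ ‖z‖ := by
  have hz1 : ‖z‖ < 1 := mem_ball_zero_iff.1 hz
  have hz0 : (0:ℝ) ≤ ‖z‖ := norm_nonneg z
  set f : ℝ → En n := fun τ => G τ (φ s τ z) with hf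
  set ψ : ℝ → En n := fun t => φ s t z with hψ
  have hψs : ψ s = z := by
    have := heq s le_rfl
    rw [intervalIntegral.integral_same] at this
    simpa [hψ] using this
  have haeN : ∀ᵐ τ ∂volume, τ ∉ N := by
    have : volume {τ : ℝ | ¬ τ ∉ N} = 0 := by
      have : {τ : ℝ | ¬ τ ∉ N} = N := by ext τ; simp
      rw [this]; exact hN0
    exact ae_iff.2 this
  -- the key monotonicity consequence on honestly-integrable intervals
  have mono : ∀ t' : ℝ, s ≤ t' → IntervalIntegrable f volume s t' →
      ∀ τ ∈ Icc s t', ‖ψ τ‖ ≤ ‖z‖ := by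
    intro t' hst' hint'
    -- continuity of ψ on [s, t']
    have hprim : ContinuousOn (fun b => ∫ x in s..b, f x) (uIcc s t') :=
      intervalIntegral.continuousOn_primitive_interval' hint' (by
        rw [uIcc_of_le hst']; exact ⟨le_rfl, hst'⟩)
    have hψcont : ContinuousOn ψ (Icc s t') := by
      have : ContinuousOn (fun b => z + ∫ x in s..b, f x) (Icc s t') := by
        apply ContinuousOn.add continuousOn_const
        rw [← uIcc_of_le hst']; exact hprim
      apply this.congr
      intro t ht
      exact heq t ht.1
    -- maximum of ‖ψ‖ on the compact interval
    have hIccne : (Icc s t').Nonempty := ⟨s, le_rfl, hst'⟩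
    obtain ⟨τm, hτm, hmax⟩ := (isCompact_Icc).exists_isMaxOn hIccne (hψcont.norm)
    set ρ : ℝ := ‖ψ τm‖ with hρ
    have hρ1 : ρ < 1 := by
      rw [hρ]; exact mem_ball_zero_iff.1 (hmem τm hτm.1)
    have hρ0 : (0:ℝ) ≤ ρ := norm_nonneg _
    have hρbd : ∀ τ ∈ Icc s t', ‖ψ τ‖ ≤ ρ := fun τ hτ => hmax hτ
    -- dissipativity data on [s, τ] for τ ∈ Icc s t'
    intro τ hτ
    have hsubτ : IntervalIntegrable f volume s τ := hint'.mono_set (by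
      rw [uIcc_of_le hτ.1, uIcc_of_le hst']
      exact Icc_subset_Icc le_rfl hτ.2)
    have heq' : ∀ t ∈ Icc s τ, ψ t = ψ s + ∫ σ in s..t, f σ := by
      intro t ht
      rw [hψs]
      exact heq t ht.1
    have hbd : ∀ᵐ σ ∂volume, σ ∈ Ioc s τ → ‖f σ‖ ≤ Mb ρ := by
      filter_upwards [haeN] with σ hσN hσ
      have hσ0 : σ ∈ Ici (0:ℝ) \ N := ⟨le_trans hs0 hσ.1.le, hσN⟩
      exact classM_norm_bound (hGN σ hσ0) hρ0 hρ1
        (hρbd σ ⟨hσ.1.le, le_trans hσ.2 hτ.2⟩)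
    have hdis : ∀ᵐ σ ∂volume, σ ∈ Ioc s τ → (inner ℂ (f σ) (ψ σ) : ℂ).re ≤ 0 := by
      filter_upwards [haeN] with σ hσN hσ
      have hσ0 : σ ∈ Ici (0:ℝ) \ N := ⟨le_trans hs0 hσ.1.le, hσN⟩
      exact (hGN σ hσ0).2.2.2 (ψ σ) (hmem σ hσ.1.le)
    have := norm_mono_of_dissipative hτ.1 (Mb_nonneg hρ0 hρ1) hsubτ heq' hbd hdis
    rw [hψs] at this
    exact this
  -- the bootstrap set
  set S : Set ℝ := {t | t ∈ Icc s t₀ ∧ IntervalIntegrable f volume s t} with hS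
  have hsS : s ∈ S := by
    refine ⟨⟨le_rfl, ht₀⟩, ?_⟩
    constructor <;> · rw [Ioc_self]; exact integrableOn_empty
  have hbdd : BddAbove S := ⟨t₀, fun t ht => ht.1.2⟩
  have hSne : S.Nonempty := ⟨s, hsS⟩
  set u : ℝ := sSup S with hu
  have hus : s ≤ u := le_csSup hbdd hsS
  have hut₀ : u ≤ t₀ := csSup_le hSne (fun t ht => ht.1.2)
  have hIco : ∀ t ∈ Ico s u, IntervalIntegrable f volume s t := by
    intro t ht
    obtain ⟨t', ht'S, htt'⟩ := exists_lt_of_lt_csSup hSne ht.2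
    exact ht'S.2.mono_set (by
      rw [uIcc_of_le ht.1, uIcc_of_le (le_trans ht.1 htt'.le)]
      exact Icc_subset_Icc le_rfl htt'.le)
  have huS : u ∈ S := by
    rcases eq_or_lt_of_le hus with heqsu | hsu
    · rw [← heqsu]; exact hsS
    refine ⟨⟨hus, hut₀⟩, ?_⟩
    rw [intervalIntegrable_iff_integrableOn_Ioc_of_le hus]
    -- a.e.-strong measurability on (s, u)
    set tk : ℕ → ℝ := fun k => u - (u - s) / (k + 1) with htk
    have htkIco : ∀ k : ℕ, tk k ∈ Ico s u := by
      intro k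
      have h1 : (0:ℝ) < (k:ℝ) + 1 := by positivity
      constructor
      · rw [htk]
        have : (u - s) / ((k:ℝ) + 1) ≤ (u - s) / 1 := by
          apply div_le_div_of_nonneg_left (by linarith) one_pos (by linarith)
        simp at this ⊢
        linarith
      · rw [htk]
        have : (0:ℝ) < (u - s) / ((k:ℝ) + 1) := div_pos (by linarith) h1
        linarith
    have hcover : (⋃ k : ℕ, Ioc s (tk k)) = Ioo s u := by
      ext x
      simp only [mem_iUnion, mem_Ioc, mem_Ioo]
      constructor
      · rintro ⟨k, h1, h2⟩
        exact ⟨h1, lt_of_le_of_lt h2 (htkIco k).2⟩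
      · rintro ⟨h1, h2⟩
        obtain ⟨k, hk⟩ := exists_nat_gt ((u - s) / (u - x))
        refine ⟨k, h1, ?_⟩
        rw [htk]
        have hux : (0:ℝ) < u - x := by linarith
        have hk1 : (u - s) / (u - x) < (k:ℝ) + 1 := lt_of_lt_of_le hk (by linarith)
        have h2' : (u - s) / ((k:ℝ) + 1) < u - x := by
          rw [div_lt_iff₀ (by positivity)]
          rw [div_lt_iff₀ hux] at hk1
          nlinarith
        linarith
    have hmeas : AEStronglyMeasurable f (volume.restrict (Ioo s u)) := by
      rw [← hcover]
      rw [aestronglyMeasurable_iUnion_iff]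
      intro k
      exact ((hIco (tk k) (htkIco k)).1).aestronglyMeasurable
    have hmeas' : AEStronglyMeasurable f (volume.restrict (Ioc s u)) := by
      rw [← Measure.restrict_congr_set Ioo_ae_eq_Ioc]
      exact hmeas
    -- a.e. bound on (s, u)
    have hbd : ∀ᵐ τ ∂volume.restrict (Ioc s u), ‖f τ‖ ≤ Mb ‖z‖ := by
      have h1 : ∀ᵐ τ ∂volume.restrict (Ioc s u), τ ∈ Ioc s u :=
        ae_restrict_mem measurableSet_Ioc
      have h2 : ∀ᵐ τ ∂volume.restrict (Ioc s u), τ ∉ N := ae_restrict_of_ae haeN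
      have h3 : ∀ᵐ τ ∂volume.restrict (Ioc s u), τ ≠ u := by
        refine ae_iff.2 ?_
        have h41 : {τ : ℝ | ¬ τ ≠ u} = {u} := by ext τ; simp
        rw [h41, Measure.restrict_apply' measurableSet_Ioc]
        exact measure_mono_null inter_subset_left Real.volume_singleton
      filter_upwards [h1, h2, h3] with τ hτ hτN hτu
      have hτu' : τ < u := lt_of_le_of_ne hτ.2 hτu
      have hψτ : ‖ψ τ‖ ≤ ‖z‖ :=
        mono τ hτ.1.le (hIco τ ⟨hτ.1.le, hτu'⟩) τ ⟨hτ.1.le, le_rfl⟩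
      have hτ0 : τ ∈ Ici (0:ℝ) \ N := ⟨le_trans hs0 hτ.1.le, hτN⟩
      exact classM_norm_bound (hGN τ hτ0) hz0 hz1 hψτ
    exact Integrable.mono'
      (integrableOn_const measure_Ioc_lt_top.ne) hmeas' hbd
  -- now show t₀ ∈ S
  have ht₀S : t₀ ∈ S := by
    rcases eq_or_lt_of_le hut₀ with hequ | hu_lt
    · rw [← hequ]; exact huS
    · -- on (u, t₀] the trajectory is constant equal to z
      have hjunk : ∀ t ∈ Ioc u t₀, ψ t = z := by
        intro t ht
        have htS : t ∉ S := fun hts => (not_lt.2 (le_csSup hbdd hts)) ht.1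
        have hnint : ¬ IntervalIntegrable f volume s t := fun hint' =>
          htS ⟨⟨le_trans hus ht.1.le, ht.2⟩, hint'⟩
        have h5 := heq t (le_trans hus ht.1.le)
        rw [intervalIntegral.integral_undef hnint] at h5
        simpa [hψ] using h5
      have hGz : IntegrableOn (fun τ => G τ z) (Ioc u t₀) volume := by
        apply Integrable.mono' (g := fun _ => Mb ‖z‖)
          (integrableOn_const measure_Ioc_lt_top.ne)
          (((hGm z hz).aestronglyMeasurable).restrict)
        have h1 : ∀ᵐ τ ∂volume.restrict (Ioc u t₀), τ ∈ Ioc u t₀ :=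
          ae_restrict_mem measurableSet_Ioc
        have h2 : ∀ᵐ τ ∂volume.restrict (Ioc u t₀), τ ∉ N := ae_restrict_of_ae haeN
        filter_upwards [h1, h2] with τ hτ hτN
        have hτ0 : τ ∈ Ici (0:ℝ) \ N := ⟨le_trans (le_trans hs0 hus) hτ.1.le, hτN⟩
        exact classM_norm_bound (hGN τ hτ0) hz0 hz1 le_rfl
      have hIocf : IntegrableOn f (Ioc u t₀) volume := by
        apply hGz.congr_fun _ measurableSet_Ioc
        intro τ hτ
        have h6 : ψ τ = z := hjunk τ hτ
        show G τ z = f τ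
        rw [show f τ = G τ (ψ τ) from rfl, h6]
      have hft : IntervalIntegrable f volume u t₀ :=
        (intervalIntegrable_iff_integrableOn_Ioc_of_le hu_lt.le).2 hIocf
      exact ⟨⟨ht₀, le_rfl⟩, huS.2.trans hft⟩
  exact ⟨ht₀S.2, fun t ht => mono t₀ ht₀ ht₀S.2 t ht⟩

lemma herglotz_bad_set {n : ℕ} {G : ℝ → En n → En n}
    (hG2 : ∀ᵐ t ∂(volume.restrict (Ici (0:ℝ))), G t ∈ ClassM n) :
    ∃ N : Set ℝ, MeasurableSet N ∧ volume N = 0 ∧ ∀ t ∈ Ici (0:ℝ) \ N, G t ∈ ClassM n := by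
  have h1 : (volume.restrict (Ici (0:ℝ))) {t | ¬ G t ∈ ClassM n} = 0 := ae_iff.1 hG2
  rw [Measure.restrict_apply' measurableSet_Ici] at h1
  obtain ⟨N, hsub, hmeas, hvol⟩ := exists_measurable_superset_of_null h1
  refine ⟨N, hmeas, hvol, fun t ht => ?_⟩
  by_contra hc
  exact ht.2 (hsub ⟨hc, ht.1⟩)

theorem regular_point_along_evolution' {n : ℕ} (G : ℝ → En n → En n)
    (φ : ℝ → ℝ → En n → En n) (T : ℝ)
    (hG : (∀ z ∈ 𝔹 n, StronglyMeasurable fun t : ℝ => G t z) ∧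
      (∀ᵐ t ∂(volume.restrict (Ici (0 : ℝ))), G t ∈ ClassM n))
    (hφ : ∀ s : ℝ, 0 ≤ s →
      (∀ t : ℝ, s ≤ t → DifferentiableOn ℂ (φ s t) (𝔹 n)) ∧
      ∀ z ∈ 𝔹 n,
        (∀ t : ℝ, s ≤ t → φ s t z ∈ 𝔹 n) ∧
        (∀ t : ℝ, s ≤ t → φ s t z = z + ∫ τ in s..t, G τ (φ s τ z)))
    (hT : 0 < T ∧ TendstoLocallyUniformlyOn
      (fun ε : ℝ => fun z => (ε⁻¹ : ℝ) • ∫ τ in T - ε..T, G τ z)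
      (fun z => G T z) (𝓝[>] (0 : ℝ)) (𝔹 n))
    (s : ℝ) (hs0 : 0 ≤ s) (hsT : s < T) :
    TendstoLocallyUniformlyOn
      (fun ε : ℝ => fun z => (ε⁻¹ : ℝ) • ∫ τ in T - ε..T, G τ (φ s τ z))
      (fun z => G T (φ s T z)) (𝓝[>] (0 : ℝ)) (𝔹 n) := by
  obtain ⟨N, hNm, hN0, hGN⟩ := herglotz_bad_set hG.2
  have hGm := hG.1
  have haeN : ∀ᵐ τ ∂volume, τ ∉ N := by
    have h0 : {τ : ℝ | ¬ τ ∉ N} = N := by ext τ; simp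
    exact ae_iff.2 (by rw [h0]; exact hN0)
  rw [tendstoLocallyUniformlyOn_iff_forall_isCompact (show IsOpen (𝔹 n) from isOpen_ball)]
  intro K hK hKc
  rcases K.eq_empty_or_nonempty with rfl | hKne
  · exact tendstoUniformlyOn_empty
  obtain ⟨z₀, hz₀K, hmaxK⟩ := hKc.exists_isMaxOn hKne (continuous_norm.continuousOn)
  set r : ℝ := ‖z₀‖ with hr
  have hr1 : r < 1 := mem_ball_zero_iff.1 (hK hz₀K)
  have hr0 : (0:ℝ) ≤ r := norm_nonneg _
  have hKr : ∀ z ∈ K, ‖z‖ ≤ r := fun z hz => hmaxK hz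
  have hcb : closedBall (0 : En n) r ⊆ 𝔹 n := closedBall_subset_ball hr1
  have hTunif := (tendstoLocallyUniformlyOn_iff_forall_isCompact
      (show IsOpen (𝔹 n) from isOpen_ball)).1 hT.2 (closedBall 0 r) hcb
      (isCompact_closedBall _ _)
  rw [Metric.tendstoUniformlyOn_iff] at hTunif ⊢
  intro η hη
  set M₀ : ℝ := Mb r with hM₀def
  set L : ℝ := Lb r with hLdef
  have hM₀ : 0 ≤ M₀ := Mb_nonneg hr0 hr1
  have hL : 0 ≤ L := Lb_nonneg hr0 hr1
  have hev1 : ∀ᶠ ε in 𝓝[>] (0:ℝ), 0 < ε := eventually_mem_nhdsWithin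
  have hev2 : ∀ᶠ ε in 𝓝[>] (0:ℝ), ε < T - s := by
    apply Eventually.filter_mono nhdsWithin_le_nhds
    exact eventually_of_mem (Iio_mem_nhds (by linarith)) (fun x hx => hx)
  have hev3 : ∀ᶠ ε in 𝓝[>] (0:ℝ), ε * (L * M₀) < η / 2 := by
    apply Eventually.filter_mono nhdsWithin_le_nhds
    have htend : Tendsto (fun ε : ℝ => ε * (L * M₀)) (𝓝 0) (𝓝 0) := by
      simpa using (tendsto_id (x := 𝓝 (0:ℝ))).mul_const (L * M₀)
    exact htend.eventually_lt_const (by linarith)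
  have hev4 := hTunif (η / 2) (by linarith)
  filter_upwards [hev1, hev2, hev3, hev4] with ε hε0 hεTs hεL hεunif
  intro z hzK
  have hzb : z ∈ 𝔹 n := hK hzK
  have hzr : ‖z‖ ≤ r := hKr z hzK
  obtain ⟨hmem, heqz⟩ := (hφ s hs0).2 z hzb
  obtain ⟨hint, hmono⟩ := evolution_integrable hGm hNm hN0 hGN hs0 hzb hmem heqz
    (le_of_lt hsT)
  have hψT : ‖φ s T z‖ ≤ r := le_trans (hmono T ⟨hsT.le, le_rfl⟩) hzr
  have hψTb : φ s T z ∈ closedBall (0 : En n) r := mem_closedBall_zero_iff.2 hψT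
  have hTε : s ≤ T - ε := by linarith
  have h2 := hεunif (φ s T z) hψTb
  have hint1 : IntervalIntegrable (fun τ => G τ (φ s τ z)) volume (T - ε) T :=
    hint.mono_set (by
      rw [uIcc_of_le (by linarith : T - ε ≤ T), uIcc_of_le hsT.le]
      exact Icc_subset_Icc hTε le_rfl)
  have hint2 : IntervalIntegrable (fun τ => G τ (φ s T z)) volume (T - ε) T := by
    rw [intervalIntegrable_iff_integrableOn_Ioc_of_le (by linarith : T - ε ≤ T)]
    apply Integrable.mono' (g := fun _ => Mb r)
      (integrableOn_const measure_Ioc_lt_top.ne)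
      ((hGm _ (hcb hψTb)).aestronglyMeasurable.restrict)
    have h1 : ∀ᵐ τ ∂volume.restrict (Ioc (T - ε) T), τ ∈ Ioc (T - ε) T :=
      ae_restrict_mem measurableSet_Ioc
    filter_upwards [h1, ae_restrict_of_ae haeN] with τ hτ hτN
    have hτ0 : (0:ℝ) ≤ τ := by linarith [hτ.1]
    exact classM_norm_bound (hGN τ ⟨hτ0, hτN⟩) hr0 hr1 hψT
  have hptn : ∀ᵐ τ ∂volume, τ ∈ Ι (T - ε) T →
      ‖G τ (φ s τ z) - G τ (φ s T z)‖ ≤ L * M₀ * ε := by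
    rw [uIoc_of_le (by linarith : T - ε ≤ T)]
    filter_upwards [haeN] with τ hτN hτ
    have hτs : s ≤ τ := le_trans hTε hτ.1.le
    have hτ0 : (0:ℝ) ≤ τ := le_trans hs0 hτs
    have hτgood : G τ ∈ ClassM n := hGN τ ⟨hτ0, hτN⟩
    have hψτr : ‖φ s τ z‖ ≤ r := (hmono τ ⟨hτs, hτ.2⟩).trans hzr
    have hdiffτ : ‖φ s τ z - φ s T z‖ ≤ M₀ * (T - τ) := by
      have hintτ : IntervalIntegrable (fun σ => G σ (φ s σ z)) volume s τ :=
        hint.mono_set (by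
          rw [uIcc_of_le hτs, uIcc_of_le hsT.le]
          exact Icc_subset_Icc le_rfl hτ.2)
      have hintτT : IntervalIntegrable (fun σ => G σ (φ s σ z)) volume τ T :=
        hint.mono_set (by
          rw [uIcc_of_le hτ.2, uIcc_of_le hsT.le]
          exact Icc_subset_Icc hτs le_rfl)
      have hadd := intervalIntegral.integral_add_adjacent_intervals hintτ hintτT
      have hdiff : φ s T z - φ s τ z = ∫ σ in τ..T, G σ (φ s σ z) := by
        rw [heqz τ hτs, heqz T hsT.le, ← hadd]
        abel
      rw [norm_sub_rev, hdiff]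
      have hb : ∀ᵐ σ ∂volume, σ ∈ Ι τ T → ‖G σ (φ s σ z)‖ ≤ M₀ := by
        rw [uIoc_of_le hτ.2]
        filter_upwards [haeN] with σ hσN hσ
        have hσs : s ≤ σ := le_trans hτs hσ.1.le
        exact classM_norm_bound (hGN σ ⟨le_trans hs0 hσs, hσN⟩) hr0 hr1
          ((hmono σ ⟨hσs, hσ.2⟩).trans hzr)
      have h7 := intervalIntegral.norm_integral_le_of_norm_le_const_ae hb
      rwa [abs_of_nonneg (by linarith [hτ.2] : (0:ℝ) ≤ T - τ)] at h7
    calc ‖G τ (φ s τ z) - G τ (φ s T z)‖ ≤ L * ‖φ s τ z - φ s T z‖ :=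
          classM_lip hτgood hr0 hr1 hψτr hψT
      _ ≤ L * (M₀ * (T - τ)) := mul_le_mul_of_nonneg_left hdiffτ hL
      _ = L * M₀ * (T - τ) := by ring
      _ ≤ L * M₀ * ε :=
          mul_le_mul_of_nonneg_left (by linarith [hτ.1]) (mul_nonneg hL hM₀)
  have hsplit : (∫ τ in T - ε..T, (G τ (φ s τ z) - G τ (φ s T z)))
      = (∫ τ in T - ε..T, G τ (φ s τ z)) - ∫ τ in T - ε..T, G τ (φ s T z) :=
    intervalIntegral.integral_sub hint1 hint2
  have hnormdiff : ‖(∫ τ in T - ε..T, G τ (φ s τ z)) - ∫ τ in T - ε..T, G τ (φ s T z)‖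
      ≤ L * M₀ * ε * ε := by
    rw [← hsplit]
    have h8 := intervalIntegral.norm_integral_le_of_norm_le_const_ae hptn
    rwa [show |T - (T - ε)| = ε by rw [abs_of_nonneg (by linarith)]; ring_nf] at h8
  have hd2 : dist ((ε⁻¹ : ℝ) • ∫ τ in T - ε..T, G τ (φ s T z))
      ((ε⁻¹ : ℝ) • ∫ τ in T - ε..T, G τ (φ s τ z)) ≤ ε * (L * M₀) := by
    rw [dist_eq_norm, ← smul_sub, norm_smul, Real.norm_eq_abs,
      abs_of_pos (inv_pos.2 hε0), norm_sub_rev]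
    calc ε⁻¹ * ‖(∫ τ in T - ε..T, G τ (φ s τ z)) - ∫ τ in T - ε..T, G τ (φ s T z)‖
        ≤ ε⁻¹ * (L * M₀ * ε * ε) :=
          mul_le_mul_of_nonneg_left hnormdiff (inv_pos.2 hε0).le
      _ = ε * (L * M₀) := by field_simp
  calc dist (G T (φ s T z)) ((ε⁻¹ : ℝ) • ∫ τ in T - ε..T, G τ (φ s τ z))
      ≤ dist (G T (φ s T z)) ((ε⁻¹ : ℝ) • ∫ τ in T - ε..T, G τ (φ s T z))
        + dist ((ε⁻¹ : ℝ) • ∫ τ in T - ε..T, G τ (φ s T z))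
          ((ε⁻¹ : ℝ) • ∫ τ in T - ε..T, G τ (φ s τ z)) := dist_triangle _ _ _
    _ < η / 2 + ε * (L * M₀) := by
        apply add_lt_add_of_lt_of_le h2 hd2
    _ < η := by linarith [hεL]

/-- **Remark (Regular points along the evolution family).** -/
theorem regular_point_along_evolution {n : ℕ} (G : ℝ → En n → En n)
    (φ : ℝ → ℝ → En n → En n) (T : ℝ)
    (hG : IsHerglotz n G) (hφ : IsEvolution n G φ) (hT : RegularPoint n G T)
    (s : ℝ) (hs0 : 0 ≤ s) (hsT : s < T) :
    TendstoLocallyUniformlyOn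
      (fun ε : ℝ => fun z => (ε⁻¹ : ℝ) • ∫ τ in T - ε..T, G τ (φ s τ z))
      (fun z => G T (φ s T z)) (𝓝[>] (0 : ℝ)) (𝔹 n) := by
  exact regular_point_along_evolution' G φ T hG hφ hT s hs0 hsT
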